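/- Let n be a square-free odd integer, let p be a prime factor of n, and set m = n/p. Suppose E ⊆ Z_n meets each coset of the subgroup of order m in at most one point, #E = p, and E is not a coset of the subgroup Z_p of order p. Then E is independent as a subset of the n-th roots of unity in ℂ. -/

import Mathlib

set_option maxHeartbeats 1000000

open IntermediateField Polynomial


def Indep (S : Set ℂ) : Prop :=
  ∀ (s : Finset ℂ) (ε : ℂ → ℤ), ↑s ⊆ S →
    (∑ z ∈ s, (ε z : ℂ) * z) = 0 → ∀ z ∈ s, ε z = 0

noncomputable def zeta (n : ℕ) (k : ZMod n) : ℂ :=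
  Complex.exp (2 * Real.pi * Complex.I * k.val / n)

lemma prim_isIntegral {k : ℕ} (hk : 0 < k) {z : ℂ} (hz : IsPrimitiveRoot z k) :
    IsIntegral ℚ z := by
  refine ⟨X ^ k - C 1, monic_X_pow_sub_C 1 hk.ne', ?_⟩
  simp [eval₂_sub, hz.pow_eq_one]

lemma finrank_adjoin_prim {k : ℕ} (hk : 0 < k) {z : ℂ} (hz : IsPrimitiveRoot z k) :
    Module.finrank ℚ ℚ⟮z⟯ = k.totient := by
  have hint : IsIntegral ℚ z := prim_isIntegral hk hz
  lift k to ℕ+ using hk with k'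
  have H := IntermediateField.adjoin_simple_toSubalgebra_of_isAlgebraic hint.isAlgebraic
  have : IsCyclotomicExtension {(k' : ℕ)} ℚ ℚ⟮z⟯ := by
    refine IsCyclotomicExtension.equiv _ _ _ (h := ?_) (.refl : ℚ⟮z⟯.toSubalgebra ≃ₐ[ℚ] _)
    rw [H]
    exact hz.adjoin_isCyclotomicExtension ℚ
  exact IsCyclotomicExtension.finrank ℚ⟮z⟯ (cyclotomic.irreducible_rat k'.pos)

lemma minpoly_eq_cyclo {p m : ℕ} (hp : p.Prime) (hm : 0 < m) (hcop : Nat.Coprime p m)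
    {ζ : ℂ} (hζ : IsPrimitiveRoot ζ (p * m)) :
    minpoly (ℚ⟮ζ ^ p⟯) (ζ ^ m) = cyclotomic p ℚ⟮ζ ^ p⟯ := by
  have hnpos : 0 < p * m := Nat.mul_pos hp.pos hm
  set K := ℚ⟮ζ ^ p⟯
  have hωp : IsPrimitiveRoot (ζ ^ m) p := hζ.pow hnpos (mul_comm p m)
  have hωm : IsPrimitiveRoot (ζ ^ p) m := hζ.pow hnpos rfl
  have hintp : IsIntegral ℚ (ζ ^ m) := prim_isIntegral hp.pos hωp
  have hintm : IsIntegral ℚ (ζ ^ p) := prim_isIntegral hm hωm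
  have hintK : IsIntegral K (ζ ^ m) := hintp.tower_top
  have hdvd : minpoly K (ζ ^ m) ∣ cyclotomic p K := by
    apply minpoly.dvd
    have : Polynomial.aeval (ζ ^ m) (cyclotomic p K) =
        Polynomial.eval (ζ ^ m) (cyclotomic p ℂ) := by
      rw [aeval_def, eval₂_eq_eval_map, map_cyclotomic]
    rw [this]
    exact hωp.isRoot_cyclotomic hp.pos
  have hcycl_ne : (cyclotomic p K) ≠ 0 := cyclotomic_ne_zero p K
  have hdegcyc : (cyclotomic p K).natDegree = p - 1 := by
    rw [natDegree_cyclotomic, Nat.totient_prime hp]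
  have hle : (minpoly K (ζ ^ m)).natDegree ≤ p - 1 := by
    rw [← hdegcyc]; exact natDegree_le_of_dvd hdvd hcycl_ne
  have hKfin : FiniteDimensional ℚ K := IntermediateField.adjoin.finiteDimensional hintm
  set Mp : IntermediateField K ℂ := K⟮ζ ^ m⟯ with hMp
  have hMfin : FiniteDimensional K Mp := IntermediateField.adjoin.finiteDimensional hintK
  have hfr : Module.finrank K Mp = (minpoly K (ζ ^ m)).natDegree :=
    IntermediateField.adjoin.finrank hintK
  have hKdeg : Module.finrank ℚ K = m.totient := finrank_adjoin_prim hm hωm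
  have hzeta_mem : ζ ∈ Mp.restrictScalars ℚ := by
    rw [IntermediateField.mem_restrictScalars]
    obtain ⟨s, t, hst⟩ : IsCoprime (p : ℤ) (m : ℤ) := by
      rw [Int.isCoprime_iff_gcd_eq_one]; exact_mod_cast hcop
    have h1 : ζ = (ζ ^ p) ^ s * (ζ ^ m) ^ t := by
      rw [← zpow_natCast ζ p, ← zpow_natCast ζ m, ← zpow_mul, ← zpow_mul,
        ← zpow_add₀ (hζ.ne_zero hnpos.ne')]
      rw [show (p : ℤ) * s + (m : ℤ) * t = 1 by linarith [hst]]; simp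
    rw [h1]
    exact mul_mem
      (zpow_mem (IntermediateField.algebraMap_mem Mp ⟨ζ ^ p, mem_adjoin_simple_self ℚ (ζ ^ p)⟩) s)
      (zpow_mem (IntermediateField.mem_adjoin_simple_self K (ζ ^ m)) t)
  have hLle : ℚ⟮ζ⟯ ≤ Mp.restrictScalars ℚ := by
    rw [IntermediateField.adjoin_simple_le_iff]; exact hzeta_mem
  have hfinM' : FiniteDimensional ℚ (Mp.restrictScalars ℚ) := by
    have : FiniteDimensional ℚ Mp := FiniteDimensional.trans ℚ K Mp
    exact this
  have hmono : Module.finrank ℚ ℚ⟮ζ⟯ ≤ Module.finrank ℚ (Mp.restrictScalars ℚ) :=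
    LinearMap.finrank_le_finrank_of_injective
      (f := (IntermediateField.inclusion hLle).toLinearMap)
      (IntermediateField.inclusion_injective hLle)
  have hres : Module.finrank ℚ (Mp.restrictScalars ℚ) = Module.finrank ℚ Mp := rfl
  have htower : Module.finrank ℚ K * Module.finrank K Mp = Module.finrank ℚ Mp :=
    Module.finrank_mul_finrank ℚ K Mp
  have hLdeg : Module.finrank ℚ ℚ⟮ζ⟯ = (p * m).totient := finrank_adjoin_prim hnpos hζ
  have htot : (p * m).totient = (p - 1) * m.totient := by
    rw [Nat.totient_mul hcop, Nat.totient_prime hp]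
  have hge : p - 1 ≤ (minpoly K (ζ ^ m)).natDegree := by
    by_contra hlt
    push_neg at hlt
    have hmt : 0 < m.totient := Nat.totient_pos.2 hm
    have : (p * m).totient < (p - 1) * m.totient := by
      calc (p * m).totient = Module.finrank ℚ ℚ⟮ζ⟯ := hLdeg.symm
        _ ≤ Module.finrank ℚ Mp := hres ▸ hmono
        _ = Module.finrank ℚ K * Module.finrank K Mp := htower.symm
        _ = m.totient * (minpoly K (ζ ^ m)).natDegree := by rw [hKdeg, hfr]
        _ < m.totient * (p - 1) := (Nat.mul_lt_mul_left hmt).2 hlt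
        _ = (p - 1) * m.totient := Nat.mul_comm _ _
    omega
  have hdeq : (minpoly K (ζ ^ m)).natDegree = (cyclotomic p K).natDegree := by omega
  obtain ⟨q, hq⟩ := hdvd
  have hmono1 : (minpoly K (ζ ^ m)).Monic := minpoly.monic hintK
  have hq0 : q ≠ 0 := by
    intro h; rw [h, mul_zero] at hq; exact hcycl_ne hq
  have hdq : q.natDegree = 0 := by
    have := natDegree_mul (hmono1.ne_zero) hq0
    rw [← hq, hdeq] at this
    omega
  have hqC : q = C (q.coeff 0) := Polynomial.eq_C_of_natDegree_eq_zero hdq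
  have hlead : (cyclotomic p K).leadingCoeff = 1 := (cyclotomic.monic p K).leadingCoeff
  rw [hq, leadingCoeff_mul, hmono1.leadingCoeff, one_mul, hqC, leadingCoeff_C] at hlead
  rw [hq, hqC, hlead, map_one, mul_one]

theorem stmt_5 (n p : ℕ) (hsf : Squarefree n) (hodd : Odd n)
    (hp : p.Prime) (hpn : p ∣ n)
    -- `Zm` is the subgroup of order `m = n / p`; `Zp` the subgroup of order `p`
    (Zm : Set (ZMod n)) (hZm : Zm = ↑(AddSubgroup.zmultiples ((p : ZMod n))))
    (Zp : Set (ZMod n)) (hZp : Zp = ↑(AddSubgroup.zmultiples (((n / p : ℕ) : ZMod n))))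
    (E : Finset (ZMod n))
    (hmeet : ∀ a : ZMod n, ((↑E : Set (ZMod n)) ∩ ((a + ·) '' Zm)).Subsingleton)
    (hcard : E.card = p)
    (hnotcoset : ¬ ∃ a : ZMod n, (↑E : Set (ZMod n)) = (a + ·) '' Zp) :
    Indep (zeta n '' ↑E) := by
  classical
  have hn0 : n ≠ 0 := hsf.ne_zero
  haveI : NeZero n := ⟨hn0⟩
  haveI : Fact p.Prime := ⟨hp⟩
  haveI : NeZero p := ⟨hp.ne_zero⟩
  set m := n / p with hm
  have hnm : n = p * m := (Nat.mul_div_cancel' hpn).symm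
  have hm0 : 0 < m := Nat.pos_of_ne_zero (by rintro h; rw [hnm, h, mul_zero] at hn0; exact hn0 rfl)
  have hcop : Nat.Coprime p m := (Nat.squarefree_mul_iff.1 (hnm ▸ hsf)).1
  have hmodd : Odd m := (Nat.Odd.of_mul_right (hnm ▸ hodd))
  -- the primitive root
  set ζ : ℂ := Complex.exp (2 * Real.pi * Complex.I / n) with hζdef
  have hζ : IsPrimitiveRoot ζ n := Complex.isPrimitiveRoot_exp n hn0
  have hζne : ζ ≠ 0 := hζ.ne_zero hn0
  have hzeta : ∀ k : ZMod n, zeta n k = ζ ^ k.val := by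
    intro k
    rw [zeta, hζdef, ← Complex.exp_nat_mul]
    congr 1
    push_cast
    ring
  have hzinj : Function.Injective (zeta n) := by
    intro a b hab
    rw [hzeta, hzeta] at hab
    exact ZMod.val_injective n (hζ.pow_inj a.val_lt b.val_lt hab)
  -- Bezout
  obtain ⟨sZ, tZ, hst⟩ : IsCoprime (p : ℤ) (m : ℤ) := by
    rw [Int.isCoprime_iff_gcd_eq_one]; exact_mod_cast hcop
  set ωp : ℂ := ζ ^ m with hωpdef
  set ωm : ℂ := ζ ^ p with hωmdef
  have hωp : IsPrimitiveRoot ωp p := hζ.pow (Nat.pos_of_ne_zero hn0) (by rw [hnm]; ring)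
  have hωm : IsPrimitiveRoot ωm m := hζ.pow (Nat.pos_of_ne_zero hn0) hnm
  have hωpne : ωp ≠ 0 := hωp.ne_zero hp.ne_zero
  have hωmne : ωm ≠ 0 := hωm.ne_zero hm0.ne'
  set K := ℚ⟮ωm⟯ with hK
  have hminp : minpoly K ωp = cyclotomic p K := minpoly_eq_cyclo hp hm0 hcop (hnm ▸ hζ)
  -- the mod-p labeling
  set a : ZMod n → ZMod p := fun e => ((tZ * e.val : ℤ) : ZMod p) with ha
  have hωmK : ωm ∈ K := mem_adjoin_simple_self ℚ ωm
  set wK : ZMod n → K := fun e => (⟨ωm, hωmK⟩ : K) ^ (sZ * (e.val : ℤ)) with hw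
  have hwC : ∀ e : ZMod n, ((wK e : ℂ)) = ωm ^ (sZ * (e.val : ℤ)) := by
    intro e; rw [hw]; exact map_zpow₀ (algebraMap K ℂ) _ _
  have hwne : ∀ e : ZMod n, (wK e : ℂ) ≠ 0 := by
    intro e; rw [hwC]; exact zpow_ne_zero _ hωmne
  -- decomposition of zeta
  have hdec : ∀ e : ZMod n, zeta n e = (wK e : ℂ) * ωp ^ (a e).val := by
    intro e
    rw [hzeta, hwC]
    have h1 : (ζ : ℂ) ^ (e.val : ℤ) = ωm ^ (sZ * (e.val : ℤ)) * ωp ^ (tZ * (e.val : ℤ)) := by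
      rw [hωmdef, hωpdef, ← zpow_natCast ζ p, ← zpow_natCast ζ m, ← zpow_mul, ← zpow_mul,
        ← zpow_add₀ hζne]
      congr 1
      have : (p : ℤ) * (sZ * e.val) + (m : ℤ) * (tZ * e.val) = (sZ * p + tZ * m) * e.val := by ring
      rw [this, hst, one_mul]
    have h2 : ωp ^ (tZ * (e.val : ℤ)) = ωp ^ (a e).val := by
      have hval : (((a e).val : ℤ)) = (tZ * (e.val : ℤ)) % p := by
        rw [ha]; exact_mod_cast ZMod.val_intCast (n := p) _
      conv_lhs => rw [show tZ * (e.val : ℤ) =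
        (p : ℤ) * ((tZ * e.val) / p) + (tZ * e.val) % p from (Int.mul_ediv_add_emod _ _).symm]
      rw [zpow_add₀ hωpne, zpow_mul, hωp.zpow_eq_one, one_zpow, one_mul, ← hval, zpow_natCast]
    rw [← zpow_natCast ζ e.val, h1, h2]
  -- injectivity of a on E
  have hainj : Set.InjOn a ↑E := by
    intro e1 he1 e2 he2 hae
    have hφ : ((e1.val : ZMod p)) = ((e2.val : ZMod p)) := by
      have htu : IsUnit (tZ : ZMod p) := by
        refine IsUnit.of_mul_eq_one ((m : ℤ) : ZMod p) ?_
        have : ((sZ * p + tZ * m : ℤ) : ZMod p) = 1 := by rw [hst]; simp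
        push_cast at this
        simpa [ZMod.natCast_self] using this
      have : (tZ : ZMod p) * (e1.val : ZMod p) = (tZ : ZMod p) * (e2.val : ZMod p) := by
        have := hae
        rw [ha] at this
        push_cast at this
        exact this
      exact htu.mul_left_cancel this
    -- now use hmeet
    have hsub : ∀ x : ZMod n, ((x.val : ZMod p)) = 0 → x ∈ Zm := by
      intro x hx
      rw [hZm]
      obtain ⟨k, hk⟩ : p ∣ x.val := by rwa [ZMod.natCast_eq_zero_iff] at hx
      rw [SetLike.mem_coe, AddSubgroup.mem_zmultiples_iff]
      refine ⟨(k : ℤ), ?_⟩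
      have hxx : ((x.val : ℕ) : ZMod n) = x := ZMod.natCast_rightInverse x
      rw [zsmul_eq_mul, ← hxx, hk]
      push_cast
      ring
    have h0 : (0 : ZMod n) ∈ Zm := by
      apply hsub; simp
    have hd : e2 - e1 ∈ Zm := by
      apply hsub
      have hcast : ∀ x : ZMod n, ((x.val : ZMod p)) = ZMod.castHom hpn (ZMod p) x := by
        intro x
        rw [ZMod.natCast_val, ZMod.castHom_apply]
      rw [hcast, map_sub]
      rw [hcast, hcast] at hφ
      rw [hφ, sub_self]
    exact hmeet e1 ⟨he1, ⟨0, h0, by simp⟩⟩ ⟨he2, ⟨e2 - e1, hd, by ring⟩⟩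
  have himg : E.image a = Finset.univ := by
    apply Finset.eq_univ_of_card
    rw [Finset.card_image_of_injOn hainj, hcard, ZMod.card p]
  -- polynomial
  have main : ∀ ε : ZMod n → ℤ, (∑ e ∈ E, (ε e : ℂ) * zeta n e) = 0 → ∀ e ∈ E, ε e = 0 := by
    intro ε hsum
    set g : Polynomial K := ∑ e ∈ E, C ((ε e : K) * wK e) * X ^ (a e).val with hg
    have hcoeffg : ∀ e ∈ E, g.coeff (a e).val = (ε e : K) * wK e := by
      intro e he
      rw [hg, finset_sum_coeff]
      rw [Finset.sum_eq_single e]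
      · rw [coeff_C_mul, coeff_X_pow, if_pos rfl, mul_one]
      · intro e' he' hne
        rw [coeff_C_mul, coeff_X_pow, if_neg, mul_zero]
        intro hvv
        exact hne (hainj he' he (ZMod.val_injective p hvv).symm)
      · intro h; exact absurd he h
    have hdeg : g.natDegree ≤ p - 1 := by
      rw [hg]
      apply Polynomial.natDegree_sum_le_of_forall_le
      intro e _
      exact (natDegree_C_mul_X_pow_le _ _).trans (by
        have := (a e).val_lt
        omega)
    have haeval : Polynomial.aeval ωp g = 0 := by
      rw [hg, map_sum, ← hsum]
      apply Finset.sum_congr rfl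
      intro e he
      rw [hdec e]
      rw [map_mul, map_pow, aeval_X, aeval_C]
      simp only [IntermediateField.algebraMap_apply]
      push_cast
      ring
    have hintK : IsIntegral K ωp := (prim_isIntegral hp.pos hωp).tower_top
    by_cases hgz : g = 0
    · intro e he
      have h1 := hcoeffg e he
      rw [hgz, coeff_zero] at h1
      have h2 : (ε e : K) = 0 := by
        rcases mul_eq_zero.1 h1.symm with h | h
        · exact h
        · exact absurd (congrArg (Subtype.val) h) (by simpa using hwne e)
      exact_mod_cast h2
    · have hdvd := minpoly.dvd K ωp haeval
      rw [hminp] at hdvd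
      obtain ⟨q, hq⟩ := hdvd
      have hq0 : q ≠ 0 := by intro h; rw [h, mul_zero] at hq; exact hgz hq
      have hcyne : (cyclotomic p K) ≠ 0 := cyclotomic_ne_zero p K
      have hdq : q.natDegree = 0 := by
        have h1 := natDegree_mul hcyne hq0
        rw [← hq] at h1
        have h2 : (cyclotomic p K).natDegree = p - 1 := by
          rw [natDegree_cyclotomic, Nat.totient_prime hp]
        have := hp.one_lt
        omega
      have hqC : q = C (q.coeff 0) := Polynomial.eq_C_of_natDegree_eq_zero hdq
      set c : K := q.coeff 0 with hc
      have hconst : ∀ e ∈ E, (ε e : K) * wK e = c := by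
        intro e he
        rw [← hcoeffg e he, hq, hqC, coeff_mul_C]
        have : (cyclotomic p K).coeff (a e).val = 1 := by
          rw [cyclotomic_prime, finset_sum_coeff]
          rw [Finset.sum_eq_single (a e).val]
          · simp
          · intro b _ hb; rw [coeff_X_pow, if_neg (Ne.symm hb)]
          · intro h; exact absurd (Finset.mem_range.2 (a e).val_lt) h
        rw [this, one_mul]
      by_cases hall : ∀ e ∈ E, ε e = 0
      · exact hall
      · exfalso
        push_neg at hall
        obtain ⟨e0, he0, hε0⟩ := hall
        have hconstC : ∀ e ∈ E, (ε e : ℂ) * (wK e : ℂ) = ((c : ℂ)) := by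
          intro e he
          have := congrArg (fun x : K => (x : ℂ)) (hconst e he)
          push_cast at this
          exact this
        have hcne : ((c : ℂ)) ≠ 0 := by
          rw [← hconstC e0 he0]
          exact mul_ne_zero (Int.cast_ne_zero.2 hε0) (hwne e0)
        have hεne : ∀ e ∈ E, ε e ≠ 0 := by
          intro e he h0
          apply hcne
          rw [← hconstC e he, h0]
          simp
        -- all w equal
        have habs : ‖ωm‖ = 1 := hωm.norm'_eq_one hm0.ne'
        have habsw : ∀ e : ZMod n, ‖(wK e : ℂ)‖ = 1 := by
          intro e
          rw [hwC, norm_zpow, habs, one_zpow]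
        have hwm : ∀ e : ZMod n, ((wK e : ℂ)) ^ m = 1 := by
          intro e
          rw [hwC, ← zpow_natCast, ← zpow_mul, mul_comm, zpow_mul, hωm.zpow_eq_one, one_zpow]
        have hweq : ∀ e ∈ E, ((wK e : ℂ)) = ((wK e0 : ℂ)) := by
          intro e he
          have h1 : (ε e : ℂ) * (wK e : ℂ) = (ε e0 : ℂ) * (wK e0 : ℂ) := by
            rw [hconstC e he, hconstC e0 he0]
          have habseq : |ε e| = |ε e0| := by
            have := congrArg (‖·‖) h1
            rw [norm_mul, norm_mul, habsw, habsw, mul_one, mul_one,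
              Complex.norm_intCast, Complex.norm_intCast] at this
            exact_mod_cast this
          rcases abs_eq_abs.1 habseq with heq | heq
          · rw [heq] at h1
            exact mul_left_cancel₀ (Int.cast_ne_zero.2 (heq ▸ hεne e he)) h1
          · exfalso
            rw [heq] at h1
            push_cast at h1
            have hne : ((ε e0 : ℤ) : ℂ) ≠ 0 := Int.cast_ne_zero.2 (hεne e0 he0)
            have h2 : ((wK e : ℂ)) = -((wK e0 : ℂ)) :=
              mul_left_cancel₀ hne (by linear_combination -h1)
            have h3 := hwm e
            rw [h2, neg_pow, hwm e0, Odd.neg_one_pow ?_, mul_one] at h3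
            · exact (by norm_num : ((-1 : ℂ)) ≠ 1) h3
            · exact_mod_cast hmodd
        -- E is a coset of Zp
        apply hnotcoset
        refine ⟨e0, ?_⟩
        have hsubE : (↑E : Set (ZMod n)) ⊆ (e0 + ·) '' Zp := by
          intro e he
          have h1 := hweq e he
          rw [hwC, hwC] at h1
          have h2 : ωm ^ (sZ * (e.val : ℤ) - sZ * (e0.val : ℤ)) = 1 := by
            rw [zpow_sub₀ hωmne, h1, div_self (zpow_ne_zero _ hωmne)]
          have h3 : (m : ℤ) ∣ sZ * ((e.val : ℤ) - (e0.val : ℤ)) := by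
            have := (hωm.zpow_eq_one_iff_dvd _).1 h2
            convert this using 1
            ring
          have hcop2 : IsCoprime (m : ℤ) sZ := ⟨tZ, (p : ℤ), by linarith [hst]⟩
          obtain ⟨k, hk⟩ := hcop2.dvd_of_dvd_mul_left h3
          refine ⟨e - e0, ?_, by ring⟩
          rw [hZp]
          rw [SetLike.mem_coe, AddSubgroup.mem_zmultiples_iff]
          refine ⟨k, ?_⟩
          have he' : ((e.val : ℕ) : ZMod n) = e := ZMod.natCast_rightInverse e
          have he0' : ((e0.val : ℕ) : ZMod n) = e0 := ZMod.natCast_rightInverse e0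
          have hd : e - e0 = (((e.val : ℤ) - (e0.val : ℤ) : ℤ) : ZMod n) := by
            push_cast [he', he0']
            ring
          rw [zsmul_eq_mul, hd, hk]
          push_cast
          ring
        apply Set.eq_of_subset_of_ncard_le hsubE ?_ (Set.toFinite _)
        have h1 : ((e0 + ·) '' Zp).ncard = p := by
          rw [Set.ncard_image_of_injective _ (add_right_injective e0), hZp]
          have : (↑(AddSubgroup.zmultiples ((m : ℕ) : ZMod n)) : Set (ZMod n)).ncard =
              Nat.card (AddSubgroup.zmultiples ((m : ℕ) : ZMod n)) :=
            (Nat.card_coe_set_eq _).symm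
          rw [this, Nat.card_zmultiples, ZMod.addOrderOf_coe m hn0,
            Nat.gcd_eq_right ⟨p, by rw [hnm]; ring⟩, hnm, Nat.mul_div_cancel _ hm0]
        rw [h1, Set.ncard_coe_finset, hcard]
  -- conclude Indep
  intro s ε hsub hsum z hz
  have hss : s ⊆ E.image (zeta n) := by
    intro y hy
    obtain ⟨e, he, rfl⟩ := hsub hy
    exact Finset.mem_image.2 ⟨e, he, rfl⟩
  set ε' : ZMod n → ℤ := fun k => if zeta n k ∈ s then ε (zeta n k) else 0 with hε'
  have h1 : ∑ e ∈ E, (ε' e : ℂ) * zeta n e = ∑ y ∈ s, (ε y : ℂ) * y :=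
    calc ∑ e ∈ E, (ε' e : ℂ) * zeta n e
        = ∑ y ∈ E.image (zeta n), ((if y ∈ s then ε y else 0 : ℤ) : ℂ) * y :=
          (Finset.sum_image (f := fun y => ((if y ∈ s then ε y else 0 : ℤ) : ℂ) * y)
            (fun x _ y _ h => hzinj h)).symm
      _ = ∑ y ∈ s, ((if y ∈ s then ε y else 0 : ℤ) : ℂ) * y :=
          (Finset.sum_subset hss (fun x _ hxs => by rw [if_neg hxs, Int.cast_zero, zero_mul])).symm
      _ = ∑ y ∈ s, (ε y : ℂ) * y := Finset.sum_congr rfl (fun y hy => by rw [if_pos hy])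
  obtain ⟨e, he, rfl⟩ := hsub hz
  have h2 := main ε' (by rw [h1]; exact hsum) e he
  rw [hε'] at h2
  simp only [if_pos hz] at h2
  exact h2
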